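/- For every n > 2, the number of touching pairs in any n-point subset of the lattice 2ℤ³ (pairs at distance exactly 2) is at most 3n − 3n^(2/3), and this bound is attained when n is a perfect cube. -/

import Mathlib

open scoped Classical
open Finset

noncomputable section

/-- Number of unordered touching pairs (distance exactly 2) in a finite point set. -/
def touchingPairs (S : Finset (EuclideanSpace ℝ (Fin 3))) : ℕ :=
  (S.sym2.filter fun p => ¬ p.IsDiag ∧ ∃ x y, p = s(x, y) ∧ dist x y = 2).card

/-- The lattice 2ℤ³ inside ℝ³. -/
def doubledIntLattice : Set (EuclideanSpace ℝ (Fin 3)) :=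
  {x | ∀ i : Fin 3, ∃ m : ℤ, x i = 2 * m}

def emb (a : Fin 3 → ℤ) : EuclideanSpace ℝ (Fin 3) := WithLp.toLp 2 (fun i => (2 * a i : ℝ))

lemma emb_apply (a : Fin 3 → ℤ) (i : Fin 3) : emb a i = 2 * a i := rfl

lemma emb_inj : Function.Injective emb := by
  intro a b h
  funext i
  have : (2 * a i : ℝ) = 2 * b i := congrArg (fun x : EuclideanSpace ℝ (Fin 3) => x i) h
  exact_mod_cast mul_left_cancel₀ (two_ne_zero) this

lemma funext3 (f g : Fin 3 → ℤ) (h0 : f 0 = g 0) (h1 : f 1 = g 1) (h2 : f 2 = g 2) : f = g := by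
  funext j; fin_cases j <;> assumption

set_option maxHeartbeats 1000000 in
lemma sq_int_three (d : Fin 3 → ℤ) (h : d 0 ^ 2 + d 1 ^ 2 + d 2 ^ 2 = 1) :
    ∃ i, (d = Pi.single i 1 ∨ d = Pi.single i (-1)) := by
  have b0 : -1 ≤ d 0 ∧ d 0 ≤ 1 := by constructor <;> nlinarith [sq_nonneg (d 1), sq_nonneg (d 2)]
  have b1 : -1 ≤ d 1 ∧ d 1 ≤ 1 := by constructor <;> nlinarith [sq_nonneg (d 0), sq_nonneg (d 2)]
  have b2 : -1 ≤ d 2 ∧ d 2 ≤ 1 := by constructor <;> nlinarith [sq_nonneg (d 0), sq_nonneg (d 1)]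
  have e0 : d 0 = -1 ∨ d 0 = 0 ∨ d 0 = 1 := by omega
  have e1 : d 1 = -1 ∨ d 1 = 0 ∨ d 1 = 1 := by omega
  have e2 : d 2 = -1 ∨ d 2 = 0 ∨ d 2 = 1 := by omega
  rcases e0 with h0|h0|h0 <;> rcases e1 with h1|h1|h1 <;> rcases e2 with h2|h2|h2 <;>
      rw [h0, h1, h2] at h <;>
      solve
        | ((refine ⟨0, Or.inl (funext3 d _ ?_ ?_ ?_)⟩) <;> simp [Pi.single_apply, h0, h1, h2])
        | ((refine ⟨0, Or.inr (funext3 d _ ?_ ?_ ?_)⟩) <;> simp [Pi.single_apply, h0, h1, h2])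
        | ((refine ⟨1, Or.inl (funext3 d _ ?_ ?_ ?_)⟩) <;> simp [Pi.single_apply, h0, h1, h2])
        | ((refine ⟨1, Or.inr (funext3 d _ ?_ ?_ ?_)⟩) <;> simp [Pi.single_apply, h0, h1, h2])
        | ((refine ⟨2, Or.inl (funext3 d _ ?_ ?_ ?_)⟩) <;> simp [Pi.single_apply, h0, h1, h2])
        | ((refine ⟨2, Or.inr (funext3 d _ ?_ ?_ ?_)⟩) <;> simp [Pi.single_apply, h0, h1, h2])
        | norm_num at h

lemma dist_emb_eq_two_iff (a b : Fin 3 → ℤ) :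
    dist (emb a) (emb b) = 2 ↔ ∃ i, (b = a + Pi.single i 1 ∨ a = b + Pi.single i 1) := by
  have hd : dist (emb a) (emb b) = Real.sqrt (∑ i, (emb a i - emb b i) ^ 2) := by
    rw [EuclideanSpace.dist_eq]
    congr 1; apply Finset.sum_congr rfl; intro i _; rw [Real.dist_eq, sq_abs]
  have hsum : (∑ i, (emb a i - emb b i) ^ 2) = 4 * ((((a 0 - b 0)^2 + (a 1 - b 1)^2 + (a 2 - b 2)^2 : ℤ) : ℝ)) := by
    simp [Fin.sum_univ_three, emb_apply]; push_cast; ring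
  constructor
  · intro h
    have h4 : (∑ i, (emb a i - emb b i) ^ 2) = 4 := by
      have := congrArg (fun t => t ^ 2) h
      simpa [hd, Real.sq_sqrt (Finset.sum_nonneg fun i _ => sq_nonneg _)] using
        (by
          rw [hd] at h
          have hnn : (0:ℝ) ≤ ∑ i, (emb a i - emb b i) ^ 2 :=
            Finset.sum_nonneg fun i _ => sq_nonneg _
          nlinarith [Real.sq_sqrt hnn, h])
    rw [hsum] at h4
    have hz : ((a 0 - b 0)^2 + (a 1 - b 1)^2 + (a 2 - b 2)^2 : ℤ) = 1 := by
      have : (((a 0 - b 0)^2 + (a 1 - b 1)^2 + (a 2 - b 2)^2 : ℤ) : ℝ) = 1 := by linarith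
      exact_mod_cast this
    obtain ⟨i, hi⟩ := sq_int_three (fun j => a j - b j) hz
    refine ⟨i, ?_⟩
    rcases hi with hi | hi
    · right; funext j; have := congrFun hi j
      by_cases hji : j = i <;> simp [Pi.single_apply, hji] at this ⊢ <;> omega
    · left; funext j; have := congrFun hi j
      by_cases hji : j = i <;> simp [Pi.single_apply, hji] at this ⊢ <;> omega
  · rintro ⟨i, hi⟩
    have hz : ((a 0 - b 0)^2 + (a 1 - b 1)^2 + (a 2 - b 2)^2 : ℤ) = 1 := by
      rcases hi with hi | hi <;> (subst hi; by_cases h0 : i = 0 <;> by_cases h1 : i = 1 <;> by_cases h2 : i = 2 <;> simp_all [Pi.single_apply] <;> omega)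
    rw [hd, hsum, hz]
    rw [show ((1:ℤ):ℝ) = 1 by norm_num]
    rw [show (4:ℝ) * 1 = 2 ^ 2 by norm_num, Real.sqrt_sq (by norm_num)]

lemma edge_proj_bound {β : Type} [DecidableEq β] (A : Finset (Fin 3 → ℤ)) (i : Fin 3)
    (π : (Fin 3 → ℤ) → β) (hπ : ∀ a : Fin 3 → ℤ, π (a + Pi.single i 1) = π a) :
    (A.filter fun a => a + Pi.single i 1 ∈ A).card + (A.image π).card ≤ A.card := by
  set E := A.filter fun a => a + Pi.single i 1 ∈ A with hE
  -- min element of each fiber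
  have fib : ∀ p ∈ A.image π, ∃ a, a ∈ A ∧ π a = p ∧ ∀ b ∈ A, π b = p → a i ≤ b i := by
    intro p hp
    have hne : (A.filter fun a => π a = p).Nonempty := by
      obtain ⟨a, ha, rfl⟩ := Finset.mem_image.mp hp
      exact ⟨a, Finset.mem_filter.mpr ⟨ha, rfl⟩⟩
    obtain ⟨a, ha, hmin⟩ := Finset.exists_min_image _ (fun a => a i) hne
    obtain ⟨ha1, ha2⟩ := Finset.mem_filter.mp ha
    exact ⟨a, ha1, ha2, fun b hb hbp => hmin b (Finset.mem_filter.mpr ⟨hb, hbp⟩)⟩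
  choose ψ hψA hψπ hψmin using fib
  -- images
  have hcard1 : (E.image (fun a => a + Pi.single i 1)).card = E.card :=
    Finset.card_image_of_injOn (fun a _ b _ hab => by
      have := congrArg (fun x => x - Pi.single i 1) hab; simpa using this)
  have hcard2 : ((A.image π).attach.image (fun p => ψ p.1 p.2)).card = (A.image π).card := by
    rw [Finset.card_image_of_injOn, Finset.card_attach]
    intro p _ q _ hpq
    have heq : ψ p.1 p.2 = ψ q.1 q.2 := hpq
    have : (p.1 : β) = q.1 := by
      rw [← hψπ p.1 p.2, ← hψπ q.1 q.2, heq]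
    exact Subtype.ext this
  have hsub : (E.image (fun a => a + Pi.single i 1)) ∪
      ((A.image π).attach.image (fun p => ψ p.1 p.2)) ⊆ A := by
    intro x hx
    rcases Finset.mem_union.mp hx with hx | hx
    · obtain ⟨a, ha, rfl⟩ := Finset.mem_image.mp hx
      exact (Finset.mem_filter.mp ha).2
    · obtain ⟨p, _, rfl⟩ := Finset.mem_image.mp hx
      exact hψA p.1 p.2
  have hdisj : Disjoint (E.image (fun a => a + Pi.single i 1))
      ((A.image π).attach.image (fun p => ψ p.1 p.2)) := by
    rw [Finset.disjoint_left]
    intro x hx1 hx2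
    obtain ⟨a, ha, rfl⟩ := Finset.mem_image.mp hx1
    obtain ⟨p, _, hp⟩ := Finset.mem_image.mp hx2
    obtain ⟨haA, haA'⟩ := Finset.mem_filter.mp ha
    have hπa : π a = p.1 := by
      have := hψπ p.1 p.2
      rw [hp, hπ a] at this
      exact this
    have := hψmin p.1 p.2 a haA hπa
    rw [hp] at this
    simp at this
  calc E.card + (A.image π).card
      = (E.image (fun a => a + Pi.single i 1) ∪
          (A.image π).attach.image (fun p => ψ p.1 p.2)).card := by
        rw [Finset.card_union_of_disjoint hdisj, hcard1, hcard2]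
    _ ≤ A.card := Finset.card_le_card hsub

lemma funext3' (f g : Fin 3 → ℤ) (h0 : f 0 = g 0) (h1 : f 1 = g 1) (h2 : f 2 = g 2) : f = g := by
  funext j; fin_cases j <;> assumption

lemma loomis_whitney (A : Finset (Fin 3 → ℤ)) :
    (A.card : ℝ) ^ 2 ≤ ((A.image fun a => (a 1, a 2)).card : ℝ) *
      ((A.image fun a => (a 0, a 2)).card : ℝ) * ((A.image fun a => (a 0, a 1)).card : ℝ) := by
  set P0 := A.image fun a => (a 1, a 2) with hP0def
  set P1 := A.image fun a => (a 0, a 2) with hP1def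
  set P2 := A.image fun a => (a 0, a 1) with hP2def
  set Z := A.image fun a => a 2 with hZdef
  have hA : A.card = ∑ z ∈ Z, (A.filter fun a => a 2 = z).card :=
    Finset.card_eq_sum_card_fiberwise (fun a ha => Finset.mem_image_of_mem _ ha)
  have hP0 : P0.card = ∑ z ∈ Z, (P0.filter fun p => p.2 = z).card :=
    Finset.card_eq_sum_card_fiberwise (fun p hp => by
      obtain ⟨a, ha, rfl⟩ := Finset.mem_image.mp hp
      exact Finset.mem_image_of_mem _ ha)
  have hP1 : P1.card = ∑ z ∈ Z, (P1.filter fun p => p.2 = z).card :=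
    Finset.card_eq_sum_card_fiberwise (fun p hp => by
      obtain ⟨a, ha, rfl⟩ := Finset.mem_image.mp hp
      exact Finset.mem_image_of_mem _ ha)
  -- slice bounds
  have slice2 : ∀ z, ((A.filter fun a => a 2 = z).card : ℝ) ≤ P2.card := by
    intro z
    have h1 : (A.filter fun a => a 2 = z).card
        = ((A.filter fun a => a 2 = z).image fun a => (a 0, a 1)).card := by
      rw [Finset.card_image_of_injOn]
      intro a ha b hb hab
      obtain ⟨-, ha2⟩ := Finset.mem_filter.mp ha
      obtain ⟨-, hb2⟩ := Finset.mem_filter.mp hb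
      exact funext3' a b (by simpa using congrArg Prod.fst hab)
        (by simpa using congrArg Prod.snd hab) (by rw [ha2, hb2])
    have h2 : ((A.filter fun a => a 2 = z).image fun a => (a 0, a 1)) ⊆ P2 :=
      Finset.image_subset_image (Finset.filter_subset _ _)
    exact_mod_cast h1 ▸ Nat.cast_le.mpr (Finset.card_le_card h2)
  have slice01 : ∀ z, ((A.filter fun a => a 2 = z).card : ℝ) ≤
      ((P1.filter fun p => p.2 = z).card : ℝ) * ((P0.filter fun p => p.2 = z).card : ℝ) := by
    intro z
    have key : (A.filter fun a => a 2 = z).card ≤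
        ((P1.filter fun p => p.2 = z) ×ˢ (P0.filter fun p => p.2 = z)).card := by
      apply Finset.card_le_card_of_injOn (fun a => ((a 0, a 2), (a 1, a 2)))
      · intro a ha
        obtain ⟨haA, ha2⟩ := Finset.mem_filter.mp ha
        refine Finset.mem_product.mpr ⟨?_, ?_⟩
        · exact Finset.mem_filter.mpr ⟨Finset.mem_image_of_mem _ haA, ha2⟩
        · exact Finset.mem_filter.mpr ⟨Finset.mem_image_of_mem _ haA, ha2⟩
      · intro a ha b hb hab
        obtain ⟨-, ha2⟩ := Finset.mem_filter.mp ha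
        obtain ⟨-, hb2⟩ := Finset.mem_filter.mp hb
        have e1 := congrArg (fun q => q.1.1) hab
        have e2 := congrArg (fun q => q.2.1) hab
        exact funext3' a b e1 e2 (by rw [ha2, hb2])
    calc ((A.filter fun a => a 2 = z).card : ℝ)
        ≤ (((P1.filter fun p => p.2 = z) ×ˢ (P0.filter fun p => p.2 = z)).card : ℝ) := by
          exact_mod_cast key
      _ = _ := by rw [Finset.card_product]; push_cast; ring
  -- combine
  have main : (A.card : ℝ) ≤ Real.sqrt (P2.card) * Real.sqrt (P1.card) * Real.sqrt (P0.card) := by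
    have step : (A.card : ℝ) ≤ Real.sqrt (P2.card) *
        ∑ z ∈ Z, Real.sqrt ((P1.filter fun p => p.2 = z).card) *
          Real.sqrt ((P0.filter fun p => p.2 = z).card) := by
      rw [hA, Finset.mul_sum]
      push_cast
      apply Finset.sum_le_sum
      intro z _
      have hnn : (0:ℝ) ≤ ((A.filter fun a => a 2 = z).card : ℝ) := by positivity
      have hsq : ((A.filter fun a => a 2 = z).card : ℝ) ^ 2 ≤
          (P2.card : ℝ) * (((P1.filter fun p => p.2 = z).card : ℝ) *
            ((P0.filter fun p => p.2 = z).card : ℝ)) := by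
        have := mul_le_mul (slice2 z) (slice01 z) hnn (by positivity)
        nlinarith [this]
      calc ((A.filter fun a => a 2 = z).card : ℝ)
          = Real.sqrt (((A.filter fun a => a 2 = z).card : ℝ) ^ 2) := by
            rw [Real.sqrt_sq hnn]
        _ ≤ Real.sqrt ((P2.card : ℝ) * (((P1.filter fun p => p.2 = z).card : ℝ) *
              ((P0.filter fun p => p.2 = z).card : ℝ))) := Real.sqrt_le_sqrt hsq
        _ = Real.sqrt (P2.card) * (Real.sqrt ((P1.filter fun p => p.2 = z).card) *
              Real.sqrt ((P0.filter fun p => p.2 = z).card)) := by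
            rw [Real.sqrt_mul (by positivity), Real.sqrt_mul (by positivity)]
        _ = _ := by ring
    have cs : ∑ z ∈ Z, Real.sqrt ((P1.filter fun p => p.2 = z).card) *
          Real.sqrt ((P0.filter fun p => p.2 = z).card)
        ≤ Real.sqrt (∑ z ∈ Z, ((P1.filter fun p => p.2 = z).card : ℝ)) *
          Real.sqrt (∑ z ∈ Z, ((P0.filter fun p => p.2 = z).card : ℝ)) :=
      Real.sum_sqrt_mul_sqrt_le _ (fun z => by positivity) (fun z => by positivity)
    have e1 : (∑ z ∈ Z, ((P1.filter fun p => p.2 = z).card : ℝ)) = (P1.card : ℝ) := by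
      rw [hP1]; push_cast; ring
    have e0 : (∑ z ∈ Z, ((P0.filter fun p => p.2 = z).card : ℝ)) = (P0.card : ℝ) := by
      rw [hP0]; push_cast; ring
    calc (A.card : ℝ) ≤ _ := step
      _ ≤ Real.sqrt (P2.card) * (Real.sqrt (P1.card) * Real.sqrt (P0.card)) := by
          rw [← e1, ← e0]
          exact mul_le_mul_of_nonneg_left cs (Real.sqrt_nonneg _)
      _ = _ := by ring
  have hnnA : (0:ℝ) ≤ (A.card : ℝ) := by positivity
  have := mul_self_le_mul_self hnnA main
  calc (A.card : ℝ) ^ 2 = (A.card : ℝ) * (A.card : ℝ) := sq (A.card : ℝ) ▸ by ring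
    _ ≤ (Real.sqrt (P2.card) * Real.sqrt (P1.card) * Real.sqrt (P0.card)) *
        (Real.sqrt (P2.card) * Real.sqrt (P1.card) * Real.sqrt (P0.card)) := this
    _ = (Real.sqrt (P2.card) * Real.sqrt (P2.card)) * ((Real.sqrt (P1.card) * Real.sqrt (P1.card)) * (Real.sqrt (P0.card) * Real.sqrt (P0.card))) := by ring
    _ = (P2.card : ℝ) * ((P1.card : ℝ) * (P0.card : ℝ)) := by
        rw [Real.mul_self_sqrt (by positivity), Real.mul_self_sqrt (by positivity),
          Real.mul_self_sqrt (by positivity)]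
    _ = _ := by ring

lemma single_ne_zero_add (a : Fin 3 → ℤ) (i : Fin 3) : a ≠ a + Pi.single i 1 := by
  intro h
  have := congrFun h i
  simp at this

lemma touching_eq (A : Finset (Fin 3 → ℤ)) :
    touchingPairs (A.image emb) = ∑ i : Fin 3, (A.filter fun a => a + Pi.single i 1 ∈ A).card := by
  set S := A.image emb with hS
  set T := S.sym2.filter fun p => ¬ p.IsDiag ∧ ∃ x y, p = s(x, y) ∧ dist x y = 2 with hT
  set D := (Finset.univ : Finset (Fin 3)).biUnion
      (fun i => (A.filter fun a => a + Pi.single i 1 ∈ A).image (fun a => (a, i))) with hD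
  have hQ : ∀ p ∈ T, ∃ c : (Fin 3 → ℤ) × Fin 3,
      (c.1 ∈ A ∧ c.1 + Pi.single c.2 1 ∈ A) ∧
        p = s(emb c.1, emb (c.1 + Pi.single c.2 1)) := by
    intro p hp
    obtain ⟨hpS, hdiag, x, y, hpxy, hdist⟩ := Finset.mem_filter.mp hp
    rw [hpxy] at hpS
    obtain ⟨hxS, hyS⟩ := Finset.mk_mem_sym2_iff.mp hpS
    obtain ⟨a, haA, rfl⟩ := Finset.mem_image.mp hxS
    obtain ⟨b, hbA, rfl⟩ := Finset.mem_image.mp hyS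
    obtain ⟨i, hi | hi⟩ := (dist_emb_eq_two_iff a b).mp hdist
    · exact ⟨(a, i), ⟨haA, by rw [← hi]; exact hbA⟩, by rw [hpxy, hi]⟩
    · exact ⟨(b, i), ⟨hbA, by rw [← hi]; exact haA⟩, by rw [hpxy, hi, Sym2.eq_swap]⟩
  have memD : ∀ c : (Fin 3 → ℤ) × Fin 3,
      (c.1 ∈ A ∧ c.1 + Pi.single c.2 1 ∈ A) ↔ c ∈ D := by
    intro c
    constructor
    · rintro ⟨h1, h2⟩
      refine Finset.mem_biUnion.mpr ⟨c.2, Finset.mem_univ _, ?_⟩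
      exact Finset.mem_image.mpr ⟨c.1, Finset.mem_filter.mpr ⟨h1, h2⟩, rfl⟩
    · intro hc
      obtain ⟨i, -, hc⟩ := Finset.mem_biUnion.mp hc
      obtain ⟨a, ha, rfl⟩ := Finset.mem_image.mp hc
      obtain ⟨h1, h2⟩ := Finset.mem_filter.mp ha
      exact ⟨h1, h2⟩
  have hTD : T.card = D.card := by
    refine Finset.card_bij' (fun p hp => (hQ p hp).choose)
      (fun c _ => s(emb c.1, emb (c.1 + Pi.single c.2 1))) ?hi ?hj ?li ?ri
    case hi =>
      intro p hp
      exact (memD _).mp (hQ p hp).choose_spec.1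
    case hj =>
      intro c hc
      obtain ⟨h1, h2⟩ := (memD c).mpr hc
      refine Finset.mem_filter.mpr ⟨?_, ?_, emb c.1, emb (c.1 + Pi.single c.2 1), rfl, ?_⟩
      · exact Finset.mk_mem_sym2_iff.mpr ⟨Finset.mem_image_of_mem _ h1,
          Finset.mem_image_of_mem _ h2⟩
      · rw [Sym2.mk_isDiag_iff]
        intro h
        exact single_ne_zero_add c.1 c.2 (emb_inj h)
      · exact (dist_emb_eq_two_iff _ _).mpr ⟨c.2, Or.inl rfl⟩
    case li =>
      intro p hp
      exact ((hQ p hp).choose_spec.2).symm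
    case ri =>
      intro c hc
      have hpT : s(emb c.1, emb (c.1 + Pi.single c.2 1)) ∈ T := by
        obtain ⟨h1, h2⟩ := (memD c).mpr hc
        refine Finset.mem_filter.mpr ⟨?_, ?_, emb c.1, emb (c.1 + Pi.single c.2 1), rfl, ?_⟩
        · exact Finset.mk_mem_sym2_iff.mpr ⟨Finset.mem_image_of_mem _ h1,
            Finset.mem_image_of_mem _ h2⟩
        · rw [Sym2.mk_isDiag_iff]
          intro h
          exact single_ne_zero_add c.1 c.2 (emb_inj h)
        · exact (dist_emb_eq_two_iff _ _).mpr ⟨c.2, Or.inl rfl⟩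
      have hspec := (hQ _ hpT).choose_spec
      set c' := (hQ _ hpT).choose with hc'
      have heq : s(emb c'.1, emb (c'.1 + Pi.single c'.2 1))
          = s(emb c.1, emb (c.1 + Pi.single c.2 1)) := hspec.2.symm
      show c' = c
      rcases Sym2.eq_iff.mp heq with ⟨e1, e2⟩ | ⟨e1, e2⟩
      · have g1 : c'.1 = c.1 := emb_inj e1
        have g2 : c'.1 + Pi.single c'.2 1 = c.1 + Pi.single c.2 1 := emb_inj e2
        rw [g1] at g2
        have g3 : (Pi.single c'.2 1 : Fin 3 → ℤ) = Pi.single c.2 1 := add_left_cancel g2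
        have g4 : c'.2 = c.2 := by
          by_contra hne
          have := congrFun g3 c'.2
          simp [Pi.single_apply, hne] at this
        exact Prod.ext g1 g4
      · exfalso
        have g1 : c'.1 = c.1 + Pi.single c.2 1 := emb_inj e1
        have g2 : c'.1 + Pi.single c'.2 1 = c.1 := emb_inj e2
        rw [g1] at g2
        have hx := congrFun g2 c.2
        simp only [Pi.add_apply, Pi.single_apply] at hx
        split_ifs at hx <;> omega
  have hDcard : D.card = ∑ i : Fin 3, (A.filter fun a => a + Pi.single i 1 ∈ A).card := by
    rw [Finset.card_biUnion]
    · apply Finset.sum_congr rfl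
      intro i _
      exact Finset.card_image_of_injective _ (fun a b hab => ((Prod.mk.injEq _ _ _ _).mp hab).1)
    · intro i _ j _ hij
      rw [Function.onFun, Finset.disjoint_left]
      rintro ⟨a, k⟩ h1 h2
      obtain ⟨b, -, hbe⟩ := Finset.mem_image.mp h1
      obtain ⟨b', -, hbe'⟩ := Finset.mem_image.mp h2
      have e1 := ((Prod.mk.injEq _ _ _ _).mp hbe).2
      have e2 := ((Prod.mk.injEq _ _ _ _).mp hbe').2
      exact hij (e1.trans e2.symm)
  rw [show touchingPairs S = T.card from rfl, hTD, hDcard]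
def latticePre (x : EuclideanSpace ℝ (Fin 3)) : Fin 3 → ℤ :=
  fun i => if h : ∃ m : ℤ, x i = 2 * m then h.choose else 0

lemma emb_latticePre {x : EuclideanSpace ℝ (Fin 3)} (hx : x ∈ doubledIntLattice) :
    emb (latticePre x) = x := by
  refine PiLp.ext fun i => ?_
  have h := hx i
  show (2 : ℝ) * ((latticePre x i : ℤ) : ℝ) = x i
  rw [show latticePre x i = h.choose from by rw [latticePre]; exact dif_pos h]
  exact (h.choose_spec).symm

lemma sum_edges_bound (A : Finset (Fin 3 → ℤ)) (hAne : A.Nonempty) :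
    ((∑ i : Fin 3, (A.filter fun a => a + Pi.single i 1 ∈ A).card : ℕ) : ℝ) ≤
      3 * A.card - 3 * (A.card : ℝ) ^ ((2 : ℝ) / 3) := by
  have h0 : (A.filter fun a => a + Pi.single 0 1 ∈ A).card
      + (A.image fun a => (a 1, a 2)).card ≤ A.card :=
    edge_proj_bound A 0 (fun a => (a 1, a 2)) (by
      intro a; simp [Prod.ext_iff, Pi.single_apply])
  have h1 : (A.filter fun a => a + Pi.single 1 1 ∈ A).card
      + (A.image fun a => (a 0, a 2)).card ≤ A.card :=
    edge_proj_bound A 1 (fun a => (a 0, a 2)) (by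
      intro a; simp [Prod.ext_iff, Pi.single_apply])
  have h2 : (A.filter fun a => a + Pi.single 2 1 ∈ A).card
      + (A.image fun a => (a 0, a 1)).card ≤ A.card :=
    edge_proj_bound A 2 (fun a => (a 0, a 1)) (by
      intro a; simp [Prod.ext_iff, Pi.single_apply])
  have hLW := loomis_whitney A
  set p0 := ((A.image fun a => (a 1, a 2)).card : ℝ) with hp0d
  set p1 := ((A.image fun a => (a 0, a 2)).card : ℝ) with hp1d
  set p2 := ((A.image fun a => (a 0, a 1)).card : ℝ) with hp2d
  have hp0 : (0:ℝ) ≤ p0 := by positivity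
  have hp1 : (0:ℝ) ≤ p1 := by positivity
  have hp2 : (0:ℝ) ≤ p2 := by positivity
  have hxnn : (0:ℝ) ≤ (A.card : ℝ) := by positivity
  have hgm : 3 * (A.card : ℝ) ^ ((2 : ℝ) / 3) ≤ p0 + p1 + p2 := by
    have e1 : ((A.card : ℝ) ^ 2) ^ ((1:ℝ)/3) = (A.card : ℝ) ^ ((2:ℝ)/3) := by
      rw [← Real.rpow_natCast ((A.card : ℝ)) 2, ← Real.rpow_mul hxnn]
      norm_num
    have key1 : (A.card : ℝ) ^ ((2:ℝ)/3) ≤ (p0 * p1 * p2) ^ ((1:ℝ)/3) := by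
      rw [← e1]
      exact Real.rpow_le_rpow (by positivity) hLW (by norm_num)
    have key2 : (p0 * p1 * p2) ^ ((1:ℝ)/3) = p0 ^ ((1:ℝ)/3) * p1 ^ ((1:ℝ)/3) * p2 ^ ((1:ℝ)/3) := by
      rw [Real.mul_rpow (by positivity) hp2, Real.mul_rpow hp0 hp1]
    have key3 : p0 ^ ((1:ℝ)/3) * p1 ^ ((1:ℝ)/3) * p2 ^ ((1:ℝ)/3) ≤
        (1/3) * p0 + (1/3) * p1 + (1/3) * p2 :=
      Real.geom_mean_le_arith_mean3_weighted (by norm_num) (by norm_num) (by norm_num)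
        hp0 hp1 hp2 (by norm_num)
    nlinarith [key1, key2.symm.trans_le (key2 ▸ key3)]
  have hsum3 : ((∑ i : Fin 3, (A.filter fun a => a + Pi.single i 1 ∈ A).card : ℕ) : ℝ) =
      ((A.filter fun a => a + Pi.single 0 1 ∈ A).card : ℝ)
      + ((A.filter fun a => a + Pi.single 1 1 ∈ A).card : ℝ)
      + ((A.filter fun a => a + Pi.single 2 1 ∈ A).card : ℝ) := by
    rw [Fin.sum_univ_three]; push_cast; ring
  have r0 : ((A.filter fun a => a + Pi.single 0 1 ∈ A).card : ℝ) + p0 ≤ (A.card : ℝ) := by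
    rw [hp0d]; exact_mod_cast h0
  have r1 : ((A.filter fun a => a + Pi.single 1 1 ∈ A).card : ℝ) + p1 ≤ (A.card : ℝ) := by
    rw [hp1d]; exact_mod_cast h1
  have r2 : ((A.filter fun a => a + Pi.single 2 1 ∈ A).card : ℝ) + p2 ≤ (A.card : ℝ) := by
    rw [hp2d]; exact_mod_cast h2
  rw [hsum3]
  linarith

lemma grid_count (k : ℕ) (i : Fin 3) :
    ((Fintype.piFinset (fun _ : Fin 3 => Finset.Ico (0:ℤ) (k:ℤ))).filter
        (fun a => a + Pi.single i 1 ∈ Fintype.piFinset (fun _ : Fin 3 => Finset.Ico (0:ℤ) (k:ℤ)))).card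
      = (k - 1) * k ^ 2 := by
  have hset : ((Fintype.piFinset (fun _ : Fin 3 => Finset.Ico (0:ℤ) (k:ℤ))).filter
        (fun a => a + Pi.single i 1 ∈ Fintype.piFinset (fun _ : Fin 3 => Finset.Ico (0:ℤ) (k:ℤ))))
      = Fintype.piFinset (Function.update (fun _ : Fin 3 => Finset.Ico (0:ℤ) (k:ℤ)) i
          (Finset.Ico (0:ℤ) ((k:ℤ) - 1))) := by
    ext a
    simp only [Finset.mem_filter, Fintype.mem_piFinset, Pi.add_apply, Pi.single_apply,
      Function.update_apply, Finset.mem_Ico]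
    constructor
    · rintro ⟨ha, hb⟩ j
      have h1 := ha j
      have h2 := hb j
      by_cases hj : j = i
      · subst hj
        simp [Finset.mem_Ico] at h2 ⊢
        omega
      · simp [Finset.mem_Ico, hj] at h2 ⊢
        omega
    · intro h
      constructor
      · intro j
        have hx := h j
        by_cases hj : j = i
        · subst hj
          simp [Finset.mem_Ico] at hx
          omega
        · simp [Finset.mem_Ico, hj] at hx
          omega
      · intro j
        have hx := h j
        by_cases hj : j = i
        · subst hj
          simp [Finset.mem_Ico] at hx ⊢
          omega
        · simp [Finset.mem_Ico, hj] at hx ⊢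
          omega
  rw [hset, Fintype.card_piFinset]
  simp only [Function.apply_update (fun (_ : Fin 3) (s : Finset ℤ) => s.card)]
  rw [Finset.prod_update_of_mem (Finset.mem_univ i), Finset.prod_const]
  have hc1 : (Finset.Ico (0:ℤ) ((k:ℤ) - 1)).card = k - 1 := by
    rw [Int.card_Ico]; omega
  have hc2 : (Finset.Ico (0:ℤ) (k:ℤ)).card = k := by
    rw [Int.card_Ico]; omega
  have hc3 : ((Finset.univ : Finset (Fin 3)).erase i).card = 2 := by
    rw [Finset.card_erase_of_mem (Finset.mem_univ i)]; simp
  have hc3' : ((Finset.univ : Finset (Fin 3)) \ {i}).card = 2 := by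
    rw [Finset.sdiff_singleton_eq_erase]
    rw [Finset.card_erase_of_mem (Finset.mem_univ i)]; simp
  rw [hc1, hc2]
  first
    | rw [hc3]
    | rw [hc3']

theorem grid_touching_pairs_bound (n : ℕ) (hn : 2 < n) :
    (∀ S : Finset (EuclideanSpace ℝ (Fin 3)),
        (S : Set (EuclideanSpace ℝ (Fin 3))) ⊆ doubledIntLattice → S.card = n →
          (touchingPairs S : ℝ) ≤ 3 * n - 3 * (n : ℝ) ^ ((2 : ℝ) / 3)) ∧
      (∀ k : ℕ, n = k ^ 3 →
        ∃ S : Finset (EuclideanSpace ℝ (Fin 3)),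
          (S : Set (EuclideanSpace ℝ (Fin 3))) ⊆ doubledIntLattice ∧ S.card = n ∧
            (touchingPairs S : ℝ) = 3 * n - 3 * (n : ℝ) ^ ((2 : ℝ) / 3)) := by
  constructor
  · intro S hsub hcard
    have hemb : ∀ x ∈ S, emb (latticePre x) = x := fun x hx => emb_latticePre (hsub hx)
    have hSA : S = (S.image latticePre).image emb := by
      rw [Finset.image_image]
      have : S.image (emb ∘ latticePre) = S.image id :=
        Finset.image_congr (fun x hx => hemb x hx)
      rw [this, Finset.image_id]
    have hAcard : (S.image latticePre).card = n := by
      rw [Finset.card_image_of_injOn, hcard]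
      intro x hx y hy hxy
      rw [← hemb x hx, ← hemb y hy, hxy]
    have hAne : (S.image latticePre).Nonempty := by
      rw [← Finset.card_pos, hAcard]; omega
    calc (touchingPairs S : ℝ)
        = ((∑ i : Fin 3, ((S.image latticePre).filter
            fun a => a + Pi.single i 1 ∈ S.image latticePre).card : ℕ) : ℝ) := by
          conv_lhs => rw [hSA, touching_eq]
      _ ≤ 3 * (S.image latticePre).card
            - 3 * ((S.image latticePre).card : ℝ) ^ ((2 : ℝ) / 3) :=
          sum_edges_bound _ hAne
      _ = 3 * n - 3 * (n : ℝ) ^ ((2 : ℝ) / 3) := by rw [hAcard]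
  · intro k hk
    have hk2 : 2 ≤ k := by
      by_contra h
      push_neg at h
      interval_cases k <;> simp_all
    refine ⟨(Fintype.piFinset (fun _ : Fin 3 => Finset.Ico (0:ℤ) (k:ℤ))).image emb, ?_, ?_, ?_⟩
    · intro x hx
      simp only [Finset.coe_image, Set.mem_image, Finset.mem_coe] at hx
      obtain ⟨a, ha, rfl⟩ := hx
      intro i
      exact ⟨a i, rfl⟩
    · rw [Finset.card_image_of_injective _ emb_inj, Fintype.card_piFinset]
      have : (Finset.Ico (0:ℤ) (k:ℤ)).card = k := by rw [Int.card_Ico]; omega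
      simp [this, hk]
    · rw [touching_eq]
      have : (∑ i : Fin 3, ((Fintype.piFinset (fun _ : Fin 3 => Finset.Ico (0:ℤ) (k:ℤ))).filter
          (fun a => a + Pi.single i 1 ∈
            Fintype.piFinset (fun _ : Fin 3 => Finset.Ico (0:ℤ) (k:ℤ)))).card)
          = 3 * ((k - 1) * k ^ 2) := by
        rw [Finset.sum_congr rfl (fun i _ => grid_count k i)]
        simp [Finset.sum_const]
      rw [this, hk]
      have hpow : ((k:ℝ) ^ (3:ℕ)) ^ ((2:ℝ)/3) = (k:ℝ) ^ (2:ℕ) := by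
        rw [← Real.rpow_natCast (k:ℝ) 3, ← Real.rpow_mul (by positivity),
          ← Real.rpow_natCast (k:ℝ) 2]
        norm_num
      push_cast [Nat.cast_sub (by omega : 1 ≤ k)]
      rw [hpow]
      ring

end
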